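/- Fix integers K, N, a, b with m = a*N − b*K > 0 (so K, N > 0 whenever DPT(K,N,a,b) is nonempty; assume K, N > 0). Let σ ∈ DPT(K,N,a,b) and i ∈ ℤ. If σ(x,y) = i and σ(x',y') = i+1, then (x − y) − (x' − y') is not divisible by N + K; in particular the contents of the cells labeled i and i+1 are distinct modulo N + K. -/

import Mathlib

/-- A standard doubly periodic tableau with respect to `(K, N, a, b)`. -/
def IsDPT (K N a b : ℤ) (σ : ℤ × ℤ → ℤ) : Prop :=
  Function.Surjective σ ∧
  (∀ x y : ℤ, σ (x + K, y - N) = σ (x, y)) ∧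
  (∀ x y : ℤ, σ (x + a, y - b) = σ (x, y) + (a * N - b * K)) ∧
  (∀ x y : ℤ, σ (x, y) < σ (x + 1, y)) ∧
  (∀ x y : ℤ, σ (x, y) < σ (x, y + 1))

/-- If `σ(x,y) = i` and `σ(x',y') = i+1` in a standard doubly periodic tableau,
then `(x − y) − (x' − y')` is not divisible by `N + K`: the contents of the cells
labeled `i` and `i+1` differ modulo `N + K`. -/
theorem content_of_consecutive_labels (K N a b : ℤ) (hK : 0 < K) (hN : 0 < N)
    (hm : 0 < a * N - b * K)
    (σ : ℤ × ℤ → ℤ) (hσ : IsDPT K N a b σ) (i x y x' y' : ℤ)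
    (h1 : σ (x, y) = i) (h2 : σ (x', y') = i + 1) :
    ¬ ((N + K) ∣ ((x - y) - (x' - y'))) := by
  obtain ⟨-, hper, -, hmx, hmy⟩ := hσ
  rintro ⟨t, ht⟩
  -- iterated periodicity
  have per : ∀ (s u v : ℤ), σ (u + s * K, v - s * N) = σ (u, v) := by
    intro s
    induction s using Int.induction_on with
    | zero => simp
    | succ n ih =>
      intro u v
      have h := hper (u + (n : ℤ) * K) (v - (n : ℤ) * N)
      have e1 : u + ((n : ℤ) + 1) * K = u + (n : ℤ) * K + K := by ring
      have e2 : v - ((n : ℤ) + 1) * N = v - (n : ℤ) * N - N := by ring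
      rw [e1, e2, h, ih]
    | pred n ih =>
      intro u v
      have h := hper (u + (-(n : ℤ) - 1) * K) (v - (-(n : ℤ) - 1) * N)
      have e1 : u + (-(n : ℤ) - 1) * K + K = u + (-(n : ℤ)) * K := by ring
      have e2 : v - (-(n : ℤ) - 1) * N - N = v - (-(n : ℤ)) * N := by ring
      rw [e1, e2, ih] at h
      exact h.symm
  -- monotonicity along x
  have monox : ∀ (d : ℕ) (u v : ℤ), σ (u, v) + d ≤ σ (u + d, v) := by
    intro d
    induction d with
    | zero => simp
    | succ n ih =>
      intro u v
      have h1 := ih u v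
      have h2 := hmx (u + n) v
      have e : u + ((n : ℤ) + 1) = u + (n : ℤ) + 1 := by ring
      push_cast
      rw [e]
      push_cast at h1
      omega
  have monoy : ∀ (d : ℕ) (u v : ℤ), σ (u, v) + d ≤ σ (u, v + d) := by
    intro d
    induction d with
    | zero => simp
    | succ n ih =>
      intro u v
      have h1 := ih u v
      have h2 := hmy u (v + n)
      have e : v + ((n : ℤ) + 1) = v + (n : ℤ) + 1 := by ring
      push_cast
      rw [e]
      push_cast at h1
      omega
  have diag : ∀ (d : ℕ) (u v : ℤ), σ (u, v) + 2 * d ≤ σ (u + d, v + d) := by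
    intro d u v
    have h1 := monox d u v
    have h2 := monoy d (u + d) v
    omega
  -- shift (x', y') to the same diagonal as (x, y)
  have key : σ (x' + t * K, y' - t * N) = i + 1 := by rw [per, h2]
  set x'' := x' + t * K with hx''
  set y'' := y' - t * N with hy''
  have hdiag : x'' - y'' = x - y := by
    have : x - y - (x' - y') = (N + K) * t := ht
    simp only [hx'', hy'']
    linarith
  set d : ℤ := x'' - x with hd
  have hdy : y'' - y = d := by omega
  rcases lt_trichotomy d 0 with hlt | heq | hgt
  · -- d < 0 : (x,y) is NE of (x'',y'')
    have hdn : ((-d).toNat : ℤ) = -d := Int.toNat_of_nonneg (by omega)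
    have := diag (-d).toNat x'' y''
    rw [show x'' + ((-d).toNat : ℤ) = x by omega, show y'' + ((-d).toNat : ℤ) = y by omega] at this
    rw [key, h1] at this
    omega
  · have : x'' = x ∧ y'' = y := by omega
    rw [this.1, this.2, h1] at key
    omega
  · have hdn : (d.toNat : ℤ) = d := Int.toNat_of_nonneg (by omega)
    have := diag d.toNat x y
    rw [show x + (d.toNat : ℤ) = x'' by omega, show y + (d.toNat : ℤ) = y'' by omega] at this
    rw [key, h1] at this
    omega
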